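/- In the two-point ambiguity model, let 𝐩 < 0 and let 𝐪 satisfy 1/𝐩 + 1/𝐪 = 1 (so 0 < 𝐪 < 1). Define h(x) := ((1 − x^𝐪 p^{1−𝐪}) / (1−p)^{1−𝐪})^{1/𝐪} for x ∈ [0, q₁ᵇ], where q₁ᵇ := p^{1/𝐩}. Then inf { G(q₁, q₂) : q₁, q₂ ≥ 0 and (q₁/p)^𝐪 p + (q₂/(1−p))^𝐪 (1−p) ≥ 1 } = inf { G(q₁, h(q₁)) : 0 ≤ q₁ ≤ q₁ᵇ }, and there exists q₁* ∈ [0, q₁ᵇ] such that (q₁*, h(q₁*)) attains the infimum on the left-hand side; in particular, at the optimum the constraint holds with equality. -/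
import Mathlib


open MeasureTheory Real

/-- Density of the `N(0, T·I_d)` distribution on `ℝ^d`. -/
noncomputable def gaussDensity (d : ℕ) (T : ℝ) (z : Fin d → ℝ) : ℝ :=
  (2 * π * T) ^ (-(d : ℝ) / 2) * Real.exp (-(∑ i, z i ^ 2) / (2 * T))

/-- Likelihood factor `L_T(ϑ, z) = exp(⟨z, ϑ⟩ - ½‖ϑ‖²T)`. -/
noncomputable def likelihood (d : ℕ) (T : ℝ) (ϑ z : Fin d → ℝ) : ℝ :=
  Real.exp ((∑ i, z i * ϑ i) - (∑ i, ϑ i ^ 2) * T / 2)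

/-- `G(q₁, q₂) = ∫ (q₁ L_T(ϑ̄, z) + q₂ L_T(ϑ̲, z))^γ φ_T(z) dz`. -/
noncomputable def Gfun (d : ℕ) (T γ : ℝ) (ϑb ϑl : Fin d → ℝ) (q₁ q₂ : ℝ) : ℝ :=
  ∫ z : Fin d → ℝ,
    (q₁ * likelihood d T ϑb z + q₂ * likelihood d T ϑl z) ^ γ * gaussDensity d T z

/-- `h(x) = ((1 - x^Q p^{1-Q}) / (1-p)^{1-Q})^{1/Q}`, solving the dual constraint
`(x/p)^Q p + (h(x)/(1-p))^Q (1-p) = 1` for the second coordinate. -/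
noncomputable def hAdj (p Q x : ℝ) : ℝ :=
  ((1 - x ^ Q * p ^ (1 - Q)) / (1 - p) ^ (1 - Q)) ^ (1 / Q)

lemma int1d {T : ℝ} (hT : 0 < T) (c : ℝ) :
    Integrable (fun x : ℝ => Real.exp (c * x - x ^ 2 / (2 * T))) := by
  have h2T : (0:ℝ) < 1 / (2 * T) := by positivity
  have h2 := ((integrable_exp_neg_mul_sq h2T).comp_sub_right (c * T)).const_mul
      (Real.exp (c ^ 2 * T / 2))
  have : (fun x : ℝ => Real.exp (c * x - x ^ 2 / (2 * T))) =
      fun x : ℝ => Real.exp (c ^ 2 * T / 2) * Real.exp (-(1 / (2 * T)) * (x - c * T) ^ 2) := by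
    funext x
    rw [← Real.exp_add]
    congr 1
    field_simp
    ring
  rw [this]; exact h2

lemma likelihood_pos (d : ℕ) (T : ℝ) (ϑ z : Fin d → ℝ) : 0 < likelihood d T ϑ z :=
  Real.exp_pos _

lemma gauss_nonneg (d : ℕ) {T : ℝ} (hT : 0 < T) (z : Fin d → ℝ) : 0 ≤ gaussDensity d T z := by
  unfold gaussDensity
  have := Real.pi_pos
  exact mul_nonneg (Real.rpow_nonneg (by positivity) _) (Real.exp_pos _).le

lemma likelihood_continuous (d : ℕ) (T : ℝ) (ϑ : Fin d → ℝ) :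
    Continuous (fun z : Fin d → ℝ => likelihood d T ϑ z) := by
  unfold likelihood
  exact Real.continuous_exp.comp
    (((continuous_finset_sum _ fun i _ => (continuous_apply i).mul continuous_const)).sub
      continuous_const)

lemma gauss_continuous (d : ℕ) (T : ℝ) :
    Continuous (fun z : Fin d → ℝ => gaussDensity d T z) := by
  unfold gaussDensity
  exact continuous_const.mul (Real.continuous_exp.comp
    (((continuous_finset_sum _ fun i _ => (continuous_apply i).pow 2).neg).div_const _))

lemma intL {d : ℕ} {T γ : ℝ} (hT : 0 < T) (ϑ : Fin d → ℝ) :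
    Integrable (fun z : Fin d → ℝ => likelihood d T ϑ z ^ γ * gaussDensity d T z) := by
  have base : Integrable (fun z : Fin d → ℝ =>
      ∏ i, Real.exp (γ * ϑ i * z i - z i ^ 2 / (2 * T))) :=
    Integrable.fintype_prod (𝕜 := ℝ) fun i => int1d hT (γ * ϑ i)
  have h2 := base.const_mul
    (Real.exp (-((∑ i, ϑ i ^ 2) * T / 2 * γ)) * (2 * π * T) ^ (-(d : ℝ) / 2))
  have key : (fun z : Fin d → ℝ => likelihood d T ϑ z ^ γ * gaussDensity d T z) =
      fun z : Fin d → ℝ =>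
        (Real.exp (-((∑ i, ϑ i ^ 2) * T / 2 * γ)) * (2 * π * T) ^ (-(d : ℝ) / 2)) *
          ∏ i, Real.exp (γ * ϑ i * z i - z i ^ 2 / (2 * T)) := by
    funext z
    rw [likelihood, gaussDensity, ← Real.exp_mul, ← Real.exp_sum]
    have hsum : ∑ i, (γ * ϑ i * z i - z i ^ 2 / (2 * T)) =
        γ * (∑ i, z i * ϑ i) - (∑ i, z i ^ 2) / (2 * T) := by
      rw [Finset.sum_sub_distrib, Finset.mul_sum, Finset.sum_div]
      congr 1
      exact Finset.sum_congr rfl fun i _ => by ring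
    rw [hsum]
    rw [show ((∑ i, z i * ϑ i) - (∑ i, ϑ i ^ 2) * T / 2) * γ =
      (-((∑ i, ϑ i ^ 2) * T / 2 * γ)) + (γ * (∑ i, z i * ϑ i)) by ring,
      show γ * (∑ i, z i * ϑ i) - (∑ i, z i ^ 2) / (2 * T) =
      (γ * (∑ i, z i * ϑ i)) + (-(∑ i, z i ^ 2) / (2 * T)) by ring,
      Real.exp_add, Real.exp_add]
    ring
  rw [key]; exact h2

lemma add_rpow_le {x y γ : ℝ} (hx : 0 ≤ x) (hy : 0 ≤ y) (hγ : 0 ≤ γ) :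
    (x + y) ^ γ ≤ 2 ^ γ * (x ^ γ + y ^ γ) := by
  have hm : x + y ≤ 2 * max x y := by
    rcases le_total x y with h | h
    · rw [max_eq_right h]; linarith
    · rw [max_eq_left h]; linarith
  have hmax : 0 ≤ max x y := le_max_of_le_left hx
  calc (x + y) ^ γ ≤ (2 * max x y) ^ γ := Real.rpow_le_rpow (by positivity) hm hγ
    _ = 2 ^ γ * (max x y) ^ γ := Real.mul_rpow (by norm_num) hmax
    _ ≤ 2 ^ γ * (x ^ γ + y ^ γ) := by
        have : (max x y) ^ γ ≤ x ^ γ + y ^ γ := by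
          rcases le_total x y with h | h
          · rw [max_eq_right h]
            exact le_add_of_nonneg_left (Real.rpow_nonneg hx _)
          · rw [max_eq_left h]
            exact le_add_of_nonneg_right (Real.rpow_nonneg hy _)
        have h2 : (0:ℝ) ≤ 2 ^ γ := Real.rpow_nonneg (by norm_num) _
        nlinarith

lemma intSum {d : ℕ} {T γ : ℝ} (hT : 0 < T) (hγ : 0 ≤ γ) (ϑb ϑl : Fin d → ℝ) :
    Integrable (fun z : Fin d → ℝ =>
      (likelihood d T ϑb z + likelihood d T ϑl z) ^ γ * gaussDensity d T z) := by
  have hb := ((intL hT ϑb (γ := γ)).add (intL hT ϑl (γ := γ))).const_mul (2 ^ γ : ℝ)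
  refine Integrable.mono' hb ?_ (Filter.Eventually.of_forall fun z => ?_)
  · exact (Continuous.aestronglyMeasurable (by
      exact ((Real.continuous_rpow_const hγ).comp
        ((likelihood_continuous d T ϑb).add (likelihood_continuous d T ϑl))).mul
        (gauss_continuous d T)))
  · have h1 := (likelihood_pos d T ϑb z).le
    have h2 := (likelihood_pos d T ϑl z).le
    have hg := gauss_nonneg d hT z
    simp only [Pi.add_apply]
    rw [Real.norm_eq_abs, abs_mul, abs_of_nonneg hg,
      abs_of_nonneg (Real.rpow_nonneg (by linarith) _)]
    have key := add_rpow_le h1 h2 hγ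
    calc (likelihood d T ϑb z + likelihood d T ϑl z) ^ γ * gaussDensity d T z
        ≤ (2 ^ γ * (likelihood d T ϑb z ^ γ + likelihood d T ϑl z ^ γ)) * gaussDensity d T z :=
          mul_le_mul_of_nonneg_right key hg
      _ = 2 ^ γ * (likelihood d T ϑb z ^ γ * gaussDensity d T z +
          likelihood d T ϑl z ^ γ * gaussDensity d T z) := by ring

lemma ptBound {d : ℕ} {T γ : ℝ} (hT : 0 < T) (hγ : 0 ≤ γ) (ϑb ϑl : Fin d → ℝ)
    {a b M : ℝ} (haM : |a| ≤ M) (hbM : |b| ≤ M) (z : Fin d → ℝ) :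
    ‖(a * likelihood d T ϑb z + b * likelihood d T ϑl z) ^ γ * gaussDensity d T z‖ ≤
      M ^ γ * ((likelihood d T ϑb z + likelihood d T ϑl z) ^ γ * gaussDensity d T z) := by
  have h1 := (likelihood_pos d T ϑb z).le
  have h2 := (likelihood_pos d T ϑl z).le
  have hg := gauss_nonneg d hT z
  have hM : 0 ≤ M := le_trans (abs_nonneg a) haM
  rw [Real.norm_eq_abs, abs_mul, abs_of_nonneg hg]
  have habs : |a * likelihood d T ϑb z + b * likelihood d T ϑl z| ≤
      M * (likelihood d T ϑb z + likelihood d T ϑl z) := by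
    calc |a * likelihood d T ϑb z + b * likelihood d T ϑl z|
        ≤ |a * likelihood d T ϑb z| + |b * likelihood d T ϑl z| := abs_add_le _ _
      _ = |a| * likelihood d T ϑb z + |b| * likelihood d T ϑl z := by
          rw [abs_mul, abs_mul, abs_of_nonneg h1, abs_of_nonneg h2]
      _ ≤ M * (likelihood d T ϑb z + likelihood d T ϑl z) := by nlinarith
  have hr : |(a * likelihood d T ϑb z + b * likelihood d T ϑl z) ^ γ| ≤
      M ^ γ * (likelihood d T ϑb z + likelihood d T ϑl z) ^ γ := by
    calc |(a * likelihood d T ϑb z + b * likelihood d T ϑl z) ^ γ|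
        ≤ |a * likelihood d T ϑb z + b * likelihood d T ϑl z| ^ γ :=
          Real.abs_rpow_le_abs_rpow _ _
      _ ≤ (M * (likelihood d T ϑb z + likelihood d T ϑl z)) ^ γ :=
          Real.rpow_le_rpow (abs_nonneg _) habs hγ
      _ = M ^ γ * (likelihood d T ϑb z + likelihood d T ϑl z) ^ γ :=
          Real.mul_rpow hM (by linarith)
  calc |(a * likelihood d T ϑb z + b * likelihood d T ϑl z) ^ γ| * gaussDensity d T z
      ≤ M ^ γ * (likelihood d T ϑb z + likelihood d T ϑl z) ^ γ * gaussDensity d T z :=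
        mul_le_mul_of_nonneg_right hr hg
    _ = M ^ γ * ((likelihood d T ϑb z + likelihood d T ϑl z) ^ γ * gaussDensity d T z) := by
        ring

lemma intAny {d : ℕ} {T γ : ℝ} (hT : 0 < T) (hγ : 0 ≤ γ) (ϑb ϑl : Fin d → ℝ) (a b : ℝ) :
    Integrable (fun z : Fin d → ℝ =>
      (a * likelihood d T ϑb z + b * likelihood d T ϑl z) ^ γ * gaussDensity d T z) := by
  have hb := (intSum hT hγ ϑb ϑl).const_mul ((|a| + |b|) ^ γ : ℝ)
  refine Integrable.mono' hb ?_ (Filter.Eventually.of_forall fun z =>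
    ptBound hT hγ ϑb ϑl (by simp) (by simp) z)
  exact (Continuous.aestronglyMeasurable (by
    exact ((Real.continuous_rpow_const hγ).comp
      ((continuous_const.mul (likelihood_continuous d T ϑb)).add
        (continuous_const.mul (likelihood_continuous d T ϑl)))).mul
      (gauss_continuous d T)))

lemma Gmono {d : ℕ} {T γ : ℝ} (hT : 0 < T) (hγ : 0 ≤ γ) (ϑb ϑl : Fin d → ℝ)
    {a a' b b' : ℝ} (ha : 0 ≤ a) (hb : 0 ≤ b) (haa : a ≤ a') (hbb : b ≤ b') :
    Gfun d T γ ϑb ϑl a b ≤ Gfun d T γ ϑb ϑl a' b' := by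
  refine integral_mono (intAny hT hγ ϑb ϑl a b)
    (intAny hT hγ ϑb ϑl a' b') fun z => ?_
  have h1 := (likelihood_pos d T ϑb z).le
  have h2 := (likelihood_pos d T ϑl z).le
  refine mul_le_mul_of_nonneg_right (Real.rpow_le_rpow (by positivity) ?_ hγ)
    (gauss_nonneg d hT z)
  have := mul_le_mul_of_nonneg_right haa h1
  have := mul_le_mul_of_nonneg_right hbb h2
  linarith

lemma Gcont {d : ℕ} {T γ : ℝ} (hT : 0 < T) (hγ : 0 ≤ γ) (ϑb ϑl : Fin d → ℝ) :
    Continuous (fun q : ℝ × ℝ => Gfun d T γ ϑb ϑl q.1 q.2) := by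
  rw [continuous_iff_continuousAt]
  intro q₀
  set M : ℝ := |q₀.1| + |q₀.2| + 1 with hM
  apply continuousAt_of_dominated (bound := fun z =>
    M ^ γ * ((likelihood d T ϑb z + likelihood d T ϑl z) ^ γ * gaussDensity d T z))
  · exact Filter.Eventually.of_forall fun q => (Continuous.aestronglyMeasurable (by
      exact ((Real.continuous_rpow_const hγ).comp
        ((continuous_const.mul (likelihood_continuous d T ϑb)).add
          (continuous_const.mul (likelihood_continuous d T ϑl)))).mul
        (gauss_continuous d T)))
  · have hball : Metric.ball q₀ 1 ∈ nhds q₀ := Metric.ball_mem_nhds q₀ one_pos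
    refine Filter.eventually_of_mem hball fun q hq => Filter.Eventually.of_forall fun z => ?_
    rw [Metric.mem_ball, Prod.dist_eq, max_lt_iff, Real.dist_eq, Real.dist_eq] at hq
    have h1 : |q.1| ≤ M := by
      have := abs_sub_abs_le_abs_sub q.1 q₀.1
      simp only [hM]; linarith [hq.1, abs_nonneg q₀.2]
    have h2 : |q.2| ≤ M := by
      have := abs_sub_abs_le_abs_sub q.2 q₀.2
      simp only [hM]; linarith [hq.2, abs_nonneg q₀.1]
    exact ptBound hT hγ ϑb ϑl h1 h2 z
  · exact (intSum hT hγ ϑb ϑl).const_mul _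
  · refine Filter.Eventually.of_forall fun z => ?_
    exact (((Real.continuous_rpow_const hγ).comp
      ((continuous_fst.mul continuous_const).add (continuous_snd.mul continuous_const))).mul
      continuous_const).continuousAt

/-- Adjusted-prior optimization in the opposite-signs case `P = λ/α < 0` (conjugate
`0 < Q < 1`): the infimum of `G` over the feasible set
`{q₁, q₂ ≥ 0, (q₁/p)^Q p + (q₂/(1-p))^Q (1-p) ≥ 1}` equals the infimum of
`q₁ ↦ G(q₁, h(q₁))` over `q₁ ∈ [0, p^{1/P}]`, and there is `q₁* ∈ [0, p^{1/P}]` such that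
`(q₁*, h(q₁*))` attains the infimum, the constraint holding there with equality. -/
theorem stmt_18 (d : ℕ) (hd : 1 ≤ d) (T : ℝ) (hT : 0 < T) (γ : ℝ) (hγ : 0 < γ)
    (ϑb ϑl : Fin d → ℝ) (p : ℝ) (hp0 : 0 < p) (hp1 : p < 1)
    (P Q : ℝ) (hP : P < 0) (hPQ : 1 / P + 1 / Q = 1) :
    sInf {r : ℝ | ∃ q₁ q₂ : ℝ, 0 ≤ q₁ ∧ 0 ≤ q₂ ∧
          1 ≤ (q₁ / p) ^ Q * p + (q₂ / (1 - p)) ^ Q * (1 - p) ∧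
          r = Gfun d T γ ϑb ϑl q₁ q₂}
      = sInf {r : ℝ | ∃ q₁ : ℝ, 0 ≤ q₁ ∧ q₁ ≤ p ^ (1 / P) ∧
          r = Gfun d T γ ϑb ϑl q₁ (hAdj p Q q₁)} ∧
    ∃ q₁star : ℝ, 0 ≤ q₁star ∧ q₁star ≤ p ^ (1 / P) ∧
      IsLeast {r : ℝ | ∃ q₁ q₂ : ℝ, 0 ≤ q₁ ∧ 0 ≤ q₂ ∧
          1 ≤ (q₁ / p) ^ Q * p + (q₂ / (1 - p)) ^ Q * (1 - p) ∧
          r = Gfun d T γ ϑb ϑl q₁ q₂}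
        (Gfun d T γ ϑb ϑl q₁star (hAdj p Q q₁star)) ∧
      (q₁star / p) ^ Q * p + (hAdj p Q q₁star / (1 - p)) ^ Q * (1 - p) = 1 := by
  have h1P : 1 / P < 0 := one_div_neg.mpr hP
  have hQ0 : 0 < Q := one_div_pos.mp (by linarith)
  have hQne : Q ≠ 0 := hQ0.ne'
  have hrel : 1 / P * Q = Q - 1 := by
    have h : 1 / P = 1 - 1 / Q := by linarith
    rw [h]
    field_simp
  have hp1' : (0:ℝ) < 1 - p := by linarith
  set B := p ^ (1 / P) with hB
  have hB0 : 0 < B := Real.rpow_pos_of_pos hp0 _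
  have hD : (0:ℝ) < (1 - p) ^ (1 - Q) := Real.rpow_pos_of_pos hp1' _
  have hBq : B ^ Q = p ^ (Q - 1) := by rw [hB, ← Real.rpow_mul hp0.le, hrel]
  have hterm : ∀ {c : ℝ}, 0 < c → ∀ {q : ℝ}, 0 ≤ q →
      (q / c) ^ Q * c = q ^ Q * c ^ (1 - Q) := by
    intro c hc q hq
    rw [Real.div_rpow hq hc.le, Real.rpow_sub hc, Real.rpow_one, div_mul_eq_mul_div,
      mul_div_assoc]
  have hinner : ∀ {x : ℝ}, 0 ≤ x → x ≤ B → 0 ≤ 1 - x ^ Q * p ^ (1 - Q) := by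
    intro x hx0 hxB
    have h1 : x ^ Q ≤ p ^ (Q - 1) := by rw [← hBq]; exact Real.rpow_le_rpow hx0 hxB hQ0.le
    have h2 : p ^ (Q - 1) * p ^ (1 - Q) = 1 := by
      rw [← Real.rpow_add hp0]; norm_num
    nlinarith [Real.rpow_pos_of_pos hp0 (1 - Q)]
  have hhnn : ∀ {x : ℝ}, 0 ≤ x → x ≤ B → 0 ≤ hAdj p Q x := fun hx0 hxB =>
    Real.rpow_nonneg (div_nonneg (hinner hx0 hxB) hD.le) _
  have hhpow : ∀ {x : ℝ}, 0 ≤ x → x ≤ B →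
      (hAdj p Q x) ^ Q = (1 - x ^ Q * p ^ (1 - Q)) / (1 - p) ^ (1 - Q) := by
    intro x hx0 hxB
    rw [hAdj, ← Real.rpow_mul (div_nonneg (hinner hx0 hxB) hD.le), one_div_mul_cancel hQne,
      Real.rpow_one]
  have hconstr : ∀ {x : ℝ}, 0 ≤ x → x ≤ B →
      (x / p) ^ Q * p + (hAdj p Q x / (1 - p)) ^ Q * (1 - p) = 1 := by
    intro x hx0 hxB
    rw [hterm hp0 hx0, hterm hp1' (hhnn hx0 hxB), hhpow hx0 hxB, div_mul_cancel₀ _ hD.ne']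
    ring
  have hhB : hAdj p Q B = 0 := by
    rw [hAdj, hBq]
    have h2 : p ^ (Q - 1) * p ^ (1 - Q) = 1 := by rw [← Real.rpow_add hp0]; norm_num
    rw [h2, sub_self, zero_div]
    exact Real.zero_rpow (one_div_ne_zero hQne)
  have hcont : ContinuousOn (fun x : ℝ => Gfun d T γ ϑb ϑl x (hAdj p Q x)) (Set.Icc 0 B) := by
    have hc2 : Continuous (hAdj p Q) := by
      unfold hAdj
      exact (Real.continuous_rpow_const (by positivity)).comp
        ((continuous_const.sub
          ((Real.continuous_rpow_const hQ0.le).mul continuous_const)).div_const _)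
    exact ((Gcont hT hγ.le ϑb ϑl).comp (continuous_id.prodMk hc2)).continuousOn
  obtain ⟨x₀, hx₀mem, hx₀min⟩ :=
    isCompact_Icc.exists_isMinOn ⟨0, Set.left_mem_Icc.mpr hB0.le⟩ hcont
  have hmin : ∀ x, 0 ≤ x → x ≤ B →
      Gfun d T γ ϑb ϑl x₀ (hAdj p Q x₀) ≤ Gfun d T γ ϑb ϑl x (hAdj p Q x) :=
    fun x hx0 hxB => isMinOn_iff.mp hx₀min x ⟨hx0, hxB⟩
  have hmemS : Gfun d T γ ϑb ϑl x₀ (hAdj p Q x₀) ∈ {r : ℝ | ∃ q₁ q₂ : ℝ, 0 ≤ q₁ ∧ 0 ≤ q₂ ∧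
      1 ≤ (q₁ / p) ^ Q * p + (q₂ / (1 - p)) ^ Q * (1 - p) ∧
      r = Gfun d T γ ϑb ϑl q₁ q₂} :=
    ⟨x₀, hAdj p Q x₀, hx₀mem.1, hhnn hx₀mem.1 hx₀mem.2, (hconstr hx₀mem.1 hx₀mem.2).ge, rfl⟩
  have hlb : ∀ r ∈ {r : ℝ | ∃ q₁ q₂ : ℝ, 0 ≤ q₁ ∧ 0 ≤ q₂ ∧
      1 ≤ (q₁ / p) ^ Q * p + (q₂ / (1 - p)) ^ Q * (1 - p) ∧
      r = Gfun d T γ ϑb ϑl q₁ q₂}, Gfun d T γ ϑb ϑl x₀ (hAdj p Q x₀) ≤ r := by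
    rintro r ⟨q₁, q₂, hq₁, hq₂, hc, rfl⟩
    by_cases hle : q₁ ≤ B
    · have hgeq : hAdj p Q q₁ ≤ q₂ := by
        by_contra hlt
        push_neg at hlt
        have hlt2 : q₂ ^ Q < (hAdj p Q q₁) ^ Q := Real.rpow_lt_rpow hq₂ hlt hQ0
        rw [hhpow hq₁ hle] at hlt2
        have h3 := (lt_div_iff₀ hD).mp hlt2
        rw [hterm hp0 hq₁, hterm hp1' hq₂] at hc
        linarith
      calc Gfun d T γ ϑb ϑl x₀ (hAdj p Q x₀) ≤ Gfun d T γ ϑb ϑl q₁ (hAdj p Q q₁) :=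
            hmin q₁ hq₁ hle
        _ ≤ Gfun d T γ ϑb ϑl q₁ q₂ := Gmono hT hγ.le ϑb ϑl hq₁ (hhnn hq₁ hle) le_rfl hgeq
    · push_neg at hle
      calc Gfun d T γ ϑb ϑl x₀ (hAdj p Q x₀) ≤ Gfun d T γ ϑb ϑl B (hAdj p Q B) :=
            hmin B hB0.le le_rfl
        _ = Gfun d T γ ϑb ϑl B 0 := by rw [hhB]
        _ ≤ Gfun d T γ ϑb ϑl q₁ q₂ := Gmono hT hγ.le ϑb ϑl hB0.le le_rfl hle.le hq₂
  have hleast : IsLeast {r : ℝ | ∃ q₁ q₂ : ℝ, 0 ≤ q₁ ∧ 0 ≤ q₂ ∧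
      1 ≤ (q₁ / p) ^ Q * p + (q₂ / (1 - p)) ^ Q * (1 - p) ∧
      r = Gfun d T γ ϑb ϑl q₁ q₂} (Gfun d T γ ϑb ϑl x₀ (hAdj p Q x₀)) := ⟨hmemS, hlb⟩
  have hsub : {r : ℝ | ∃ q₁ : ℝ, 0 ≤ q₁ ∧ q₁ ≤ B ∧
      r = Gfun d T γ ϑb ϑl q₁ (hAdj p Q q₁)} ⊆ {r : ℝ | ∃ q₁ q₂ : ℝ, 0 ≤ q₁ ∧ 0 ≤ q₂ ∧
      1 ≤ (q₁ / p) ^ Q * p + (q₂ / (1 - p)) ^ Q * (1 - p) ∧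
      r = Gfun d T γ ϑb ϑl q₁ q₂} := by
    rintro r ⟨x, hx0, hxB, rfl⟩
    exact ⟨x, hAdj p Q x, hx0, hhnn hx0 hxB, (hconstr hx0 hxB).ge, rfl⟩
  have hmemS' : Gfun d T γ ϑb ϑl x₀ (hAdj p Q x₀) ∈ {r : ℝ | ∃ q₁ : ℝ, 0 ≤ q₁ ∧ q₁ ≤ B ∧
      r = Gfun d T γ ϑb ϑl q₁ (hAdj p Q q₁)} := ⟨x₀, hx₀mem.1, hx₀mem.2, rfl⟩
  refine ⟨?_, x₀, hx₀mem.1, hx₀mem.2, hleast, hconstr hx₀mem.1 hx₀mem.2⟩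
  rw [hleast.csInf_eq]
  exact le_antisymm (le_csInf ⟨_, hmemS'⟩ fun r hr => hleast.2 (hsub hr))
    (csInf_le ⟨_, fun r hr => hleast.2 (hsub hr)⟩ hmemS')
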